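/- Let O be an order in an imaginary quadratic field K, and let L be a proper (invertible) fractional O-ideal which, viewed as a lattice in ℂ ≅ ℝ², is well rounded (i.e., there exist two ℝ-linearly independent minimal vectors forming a ℤ-basis of L). Then L² is a principal fractional O-ideal, i.e., the class of L in the proper ideal class group of O has order dividing 2. -/

import Mathlib

open Pointwise

/-- A (full-rank) lattice in the plane `ℂ ≅ ℝ²`. -/
def IsLattice (L : AddSubgroup ℂ) : Prop :=
  ∃ v w : ℂ, LinearIndependent ℝ ![v, w] ∧ L = AddSubgroup.closure {v, w}

/-- The product of two lattices (fractional ideals) in `ℂ`: the additive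
group generated by all products `x * y` with `x ∈ L`, `y ∈ M`. -/
noncomputable def latMul (L M : AddSubgroup ℂ) : AddSubgroup ℂ :=
  AddSubgroup.closure {z : ℂ | ∃ x ∈ L, ∃ y ∈ M, z = x * y}

lemma mem_closure_pair {v w z : ℂ} :
    z ∈ AddSubgroup.closure ({v, w} : Set ℂ) ↔ ∃ m n : ℤ, z = (m : ℂ) * v + (n : ℂ) * w := by
  constructor
  · intro hz
    induction hz using AddSubgroup.closure_induction with
    | mem x hx =>
      rcases hx with rfl | rfl
      · exact ⟨1, 0, by simp⟩
      · exact ⟨0, 1, by simp⟩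
    | zero => exact ⟨0, 0, by simp⟩
    | add x y hx hy ihx ihy =>
      obtain ⟨m, n, rfl⟩ := ihx
      obtain ⟨m', n', rfl⟩ := ihy
      exact ⟨m + m', n + n', by push_cast; ring⟩
    | neg x hx ihx =>
      obtain ⟨m, n, rfl⟩ := ihx
      exact ⟨-m, -n, by push_cast; ring⟩
  · rintro ⟨m, n, rfl⟩
    have hv : v ∈ AddSubgroup.closure ({v, w} : Set ℂ) :=
      AddSubgroup.subset_closure (by simp)
    have hw : w ∈ AddSubgroup.closure ({v, w} : Set ℂ) :=
      AddSubgroup.subset_closure (by simp)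
    have h1 := AddSubgroup.zsmul_mem _ hv m
    have h2 := AddSubgroup.zsmul_mem _ hw n
    simpa [zsmul_eq_mul] using add_mem h1 h2

lemma dep3 {p q a1 a2 a3 : ℂ} {m1 n1 m2 n2 m3 n3 : ℤ}
    (h1 : a1 = (m1 : ℂ) * p + (n1 : ℂ) * q)
    (h2 : a2 = (m2 : ℂ) * p + (n2 : ℂ) * q)
    (h3 : a3 = (m3 : ℂ) * p + (n3 : ℂ) * q)
    (hne : ¬(m1 = 0 ∧ n1 = 0)) :
    ∃ x y z : ℤ, ¬(x = 0 ∧ y = 0 ∧ z = 0) ∧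
      (x : ℂ) * a1 + (y : ℂ) * a2 + (z : ℂ) * a3 = 0 := by
  by_cases hc : m2 * n3 - n2 * m3 = 0 ∧ m3 * n1 - n3 * m1 = 0 ∧ m1 * n2 - n1 * m2 = 0
  · obtain ⟨hc1, hc2, hc3⟩ := hc
    rcases not_and_or.mp hne with hm | hn
    · refine ⟨m2, -m1, 0, by rintro ⟨-, h, -⟩; exact hm (neg_eq_zero.mp h), ?_⟩
      have hc3' : ((m1 * n2 - n1 * m2 : ℤ) : ℂ) = ((0 : ℤ) : ℂ) := by rw [hc3]
      push_cast at hc3'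
      subst h1 h2 h3
      push_cast
      linear_combination -q * hc3'
    · refine ⟨n2, -n1, 0, by rintro ⟨-, h, -⟩; exact hn (neg_eq_zero.mp h), ?_⟩
      have hc3' : ((m1 * n2 - n1 * m2 : ℤ) : ℂ) = ((0 : ℤ) : ℂ) := by rw [hc3]
      push_cast at hc3'
      subst h1 h2 h3
      push_cast
      linear_combination p * hc3'
  · refine ⟨m2 * n3 - n2 * m3, m3 * n1 - n3 * m1, m1 * n2 - n1 * m2, by tauto, ?_⟩
    subst h1 h2 h3
    push_cast
    ring

/-- Let `O` be an order in an imaginary quadratic field (formalized as a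
subring of `ℂ` which is a plane lattice), and let `L` be a proper fractional
`O`-ideal (a lattice contained in the fraction field of `O` whose coefficient
ring is exactly `O`) which is well rounded (it has a ℤ-basis of two minimal
vectors).  Then `L² = L·L` is a principal fractional `O`-ideal `α O`. -/
theorem wellRounded_sq_principal (O : Subring ℂ) (hO : IsLattice O.toAddSubgroup)
    (L : AddSubgroup ℂ) (hL : IsLattice L)
    (hfrac : ∀ z ∈ L, ∃ x ∈ O, ∃ y ∈ O, y ≠ 0 ∧ z = x / y)
    (hproper : {α : ℂ | ∀ z ∈ L, α * z ∈ L} = (O : Set ℂ))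
    (hWR : ∃ v w : ℂ, v ∈ L ∧ w ∈ L ∧ LinearIndependent ℝ ![v, w] ∧
      L = AddSubgroup.closure {v, w} ∧ ‖v‖ = ‖w‖ ∧
      ∀ u ∈ L, u ≠ 0 → ‖v‖ ≤ ‖u‖) :
    ∃ α : ℂ, α ≠ 0 ∧ latMul L L = α • O.toAddSubgroup := by
  obtain ⟨v, w, hvL, hwL, hind, hLvw, habs, -⟩ := hWR
  have hv0 : v ≠ 0 := by simpa using hind.ne_zero 0
  have hw0 : w ≠ 0 := by simpa using hind.ne_zero 1
  obtain ⟨τ, rfl⟩ : ∃ τ : ℂ, w = τ * v := ⟨w / v, (div_mul_cancel₀ w hv0).symm⟩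
  have hτim : τ.im ≠ 0 := by
    intro h
    have hre : (τ.re : ℂ) = τ := by
      apply Complex.ext <;> simp [h]
    have := (LinearIndependent.pair_iff.mp hind τ.re (-1) ?_).2
    · norm_num at this
    · rw [neg_one_smul, Complex.real_smul, hre]
      ring
  have huniq : ∀ r s r' s' : ℤ, (r : ℂ) + (s : ℂ) * τ = (r' : ℂ) + (s' : ℂ) * τ →
      r = r' ∧ s = s' := by
    intro r s r' s' h
    have him := congrArg Complex.im h
    simp [Complex.add_im, Complex.mul_im] at him
    rcases him with hs | h0
    · have hs' : s = s' := by exact_mod_cast hs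
      subst hs'
      refine ⟨?_, rfl⟩
      have hre := congrArg Complex.re h
      simp [Complex.add_re, Complex.mul_re] at hre
      exact_mod_cast hre
    · exact absurd h0 hτim
  -- τ is quadratic over ℚ
  obtain ⟨xw, hxwO, yw, hywO, hyw0, hwq⟩ := hfrac (τ * v) hwL
  obtain ⟨xv, hxvO, yv, hyvO, hyv0, hvq⟩ := hfrac v hvL
  have hxv0 : xv ≠ 0 := fun h => hv0 (by simp [hvq, h])
  set β : ℂ := xw * yv with hβ
  set γ : ℂ := yw * xv with hγ
  have hγ0 : γ ≠ 0 := mul_ne_zero hyw0 hxv0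
  have hxw : xw = τ * v * yw := by
    rw [hwq, div_mul_cancel₀ _ hyw0]
  have hxv : xv = v * yv := by
    rw [hvq, div_mul_cancel₀ _ hyv0]
  have hβγ : β = τ * γ := by
    rw [hβ, hγ, hxw, hxv]
    ring
  obtain ⟨p, q, -, hOeq⟩ := hO
  have hOmem : ∀ t : ℂ, t ∈ O → ∃ m n : ℤ, t = (m : ℂ) * p + (n : ℂ) * q := by
    intro t ht
    have ht' : t ∈ O.toAddSubgroup := ht
    rw [hOeq] at ht'
    exact mem_closure_pair.mp ht'
  have hβO : β ∈ O := O.mul_mem hxwO hyvO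
  have hγO : γ ∈ O := O.mul_mem hywO hxvO
  obtain ⟨m1, n1, h1⟩ := hOmem _ (O.mul_mem hγO hγO)
  obtain ⟨m2, n2, h2⟩ := hOmem _ (O.mul_mem hγO hβO)
  obtain ⟨m3, n3, h3⟩ := hOmem _ (O.mul_mem hβO hβO)
  have hne : ¬(m1 = 0 ∧ n1 = 0) := by
    rintro ⟨rfl, rfl⟩
    simp at h1
    exact hγ0 h1
  obtain ⟨x, y, z, hxyz, hrel⟩ := dep3 h1 h2 h3 hne
  have hrelτ : (z : ℂ) * τ ^ 2 + (y : ℂ) * τ + (x : ℂ) = 0 := by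
    have h7 : (γ * γ) * ((z : ℂ) * τ ^ 2 + (y : ℂ) * τ + (x : ℂ)) = 0 := by
      rw [hβγ] at hrel
      linear_combination hrel
    rcases mul_eq_zero.mp h7 with h | h
    · exact absurd h (mul_ne_zero hγ0 hγ0)
    · exact h
  have hz0 : z ≠ 0 := by
    rintro rfl
    have h8 : (y : ℂ) * τ + (x : ℂ) = 0 := by linear_combination hrelτ
    have him := congrArg Complex.im h8
    simp [Complex.add_im, Complex.mul_im] at him
    rcases him with hy | hτ0
    · have hy' : y = 0 := by exact_mod_cast hy
      subst hy'
      simp at h8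
      have hx : x = 0 := by exact_mod_cast h8
      exact hxyz ⟨hx, rfl, rfl⟩
    · exact hτim hτ0
  -- conjugation: the constant coefficient equals the leading one
  set σ : ℂ := (starRingEnd ℂ) τ with hσ
  have hrelσ : (z : ℂ) * σ ^ 2 + (y : ℂ) * σ + (x : ℂ) = 0 := by
    have := congrArg (starRingEnd ℂ) hrelτ
    simpa [map_add, map_mul, map_pow, map_intCast] using this
  have habsτ : ‖τ‖ = 1 := by
    have h := habs
    rw [norm_mul] at h
    have h2 : ‖τ‖ * ‖v‖ = 1 * ‖v‖ := by
      rw [one_mul]; exact h.symm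
    exact mul_right_cancel₀ (norm_ne_zero_iff.mpr hv0) h2
  have hτσ : τ * σ = 1 := by
    rw [hσ, Complex.mul_conj, Complex.normSq_eq_norm_sq, habsτ]
    norm_num
  have hτσne : τ ≠ σ := by
    intro h
    exact hτim (Complex.conj_eq_iff_im.mp h.symm)
  have hE1 : (z : ℂ) * (τ + σ) + (y : ℂ) = 0 := by
    have hE0 : (τ - σ) * ((z : ℂ) * (τ + σ) + (y : ℂ)) = 0 := by
      linear_combination hrelτ - hrelσ
    rcases mul_eq_zero.mp hE0 with h | h
    · exact absurd (sub_eq_zero.mp h) hτσne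
    · exact h
  have hca : (x : ℂ) = (z : ℂ) := by
    linear_combination hrelτ - τ * hE1 + (z : ℂ) * hτσ
  have hxz : x = z := by exact_mod_cast hca
  -- normalize: divide by gcd
  set g : ℕ := Int.gcd z y with hgdef
  have hgne : (g : ℤ) ≠ 0 := by
    simp only [hgdef]
    intro h
    exact hz0 (Int.gcd_eq_zero_iff.mp (by exact_mod_cast h)).1
  set a : ℤ := z / g with hadef
  set b : ℤ := y / g with hbdef
  have hza : z = g * a := (Int.mul_ediv_cancel' (Int.gcd_dvd_left z y)).symm
  have hyb : y = g * b := (Int.mul_ediv_cancel' (Int.gcd_dvd_right z y)).symm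
  have hcop : Int.gcd a b = 1 := Int.gcd_div_gcd_div_gcd (by omega)
  have ha0 : a ≠ 0 := fun h => hz0 (by rw [hza, h, mul_zero])
  have haC : (a : ℂ) ≠ 0 := Int.cast_ne_zero.mpr ha0
  have relq : (a : ℂ) * τ ^ 2 + (b : ℂ) * τ + (a : ℂ) = 0 := by
    have hgC : ((g : ℤ) : ℂ) ≠ 0 := Int.cast_ne_zero.mpr hgne
    apply mul_left_cancel₀ hgC
    rw [mul_zero]
    rw [hxz, hza, hyb] at hrelτ
    push_cast at hrelτ ⊢
    linear_combination hrelτ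
  have hcop' : IsCoprime a b := Int.isCoprime_iff_gcd_eq_one.mpr hcop
  have hbez0 := hcop'
  obtain ⟨u1, u2, hbez⟩ := hbez0
  have hbezC : (u1 : ℂ) * (a : ℂ) + (u2 : ℂ) * (b : ℂ) = 1 := by
    exact_mod_cast congrArg (Int.cast : ℤ → ℂ) hbez
  -- membership characterizations
  have hLmem : ∀ {u : ℂ}, u ∈ L ↔ ∃ m n : ℤ, u = (m : ℂ) * v + (n : ℂ) * (τ * v) := by
    intro u
    rw [hLvw]
    exact mem_closure_pair
  have hOiff : ∀ t : ℂ, t ∈ O ↔ ∀ u ∈ L, t * u ∈ L := by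
    intro t
    rw [← SetLike.mem_coe, ← hproper]
    exact Iff.rfl
  have hOchar : ∀ t : ℂ, t ∈ O ↔ ∃ m k : ℤ, t = (m : ℂ) + (k : ℂ) * ((a : ℂ) * τ) := by
    intro t
    constructor
    · intro ht
      obtain ⟨m, n, hmn⟩ := hLmem.mp ((hOiff t).mp ht v hvL)
      have htv : t = (m : ℂ) + (n : ℂ) * τ := by
        apply mul_right_cancel₀ hv0
        rw [hmn]
        ring
      obtain ⟨m', n', hmn'⟩ := hLmem.mp ((hOiff t).mp ht (τ * v) hwL)
      have e1 : ((m : ℂ) + (n : ℂ) * τ) * τ = (m' : ℂ) + (n' : ℂ) * τ := by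
        apply mul_right_cancel₀ hv0
        rw [← htv]
        calc t * τ * v = t * (τ * v) := by ring
        _ = ((m' : ℂ) + (n' : ℂ) * τ) * v := by rw [hmn']; ring
      have e2 : ((-(n * a) : ℤ) : ℂ) + ((m * a - n * b : ℤ) : ℂ) * τ =
          ((m' * a : ℤ) : ℂ) + ((n' * a : ℤ) : ℂ) * τ := by
        push_cast
        linear_combination (a : ℂ) * e1 - (n : ℂ) * relq
      obtain ⟨-, hn⟩ := huniq _ _ _ _ e2
      have hdvd : a ∣ n * b := ⟨m - n', by linarith⟩
      obtain ⟨k, hk⟩ := hcop'.dvd_of_dvd_mul_right hdvd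
      refine ⟨m, k, ?_⟩
      rw [htv, hk]
      push_cast
      ring
    · rintro ⟨m, k, rfl⟩
      refine (hOiff _).mpr ?_
      rintro u hu
      obtain ⟨m', n', rfl⟩ := hLmem.mp hu
      refine hLmem.mpr ⟨m * m' - k * n' * a, m * n' + k * a * m' - k * n' * b, ?_⟩
      push_cast
      linear_combination (v * (k : ℂ) * (n' : ℂ)) * relq
  -- the principal generator
  refine ⟨v * (τ * v) / (a : ℂ), div_ne_zero (mul_ne_zero hv0 hw0) haC, ?_⟩
  apply le_antisymm
  · rw [latMul]
    refine (AddSubgroup.closure_le _).mpr ?_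
    rintro t ⟨x1, hx1, y1, hy1, rfl⟩
    obtain ⟨m, n, rfl⟩ := hLmem.mp hx1
    obtain ⟨m', n', rfl⟩ := hLmem.mp hy1
    rw [SetLike.mem_coe, AddSubgroup.mem_smul_pointwise_iff_exists]
    refine ⟨((a * (m * n' + n * m') - m * m' * b : ℤ) : ℂ) +
      ((n * n' - m * m' : ℤ) : ℂ) * ((a : ℂ) * τ), ?_, ?_⟩
    · rw [Subring.mem_toAddSubgroup]
      exact (hOchar _).mpr ⟨_, _, rfl⟩
    · rw [smul_eq_mul]
      push_cast
      field_simp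
      linear_combination (-((m : ℂ) * (m' : ℂ))) * relq
  · intro t ht
    rw [AddSubgroup.mem_smul_pointwise_iff_exists] at ht
    obtain ⟨s, hsO, hs⟩ := ht
    rw [Subring.mem_toAddSubgroup] at hsO
    obtain ⟨m, k, rfl⟩ := (hOchar s).mp hsO
    have hvwLL : v * (τ * v) ∈ latMul L L := AddSubgroup.subset_closure ⟨v, hvL, (τ * v), hwL, rfl⟩
    have hvvLL : v * v ∈ latMul L L := AddSubgroup.subset_closure ⟨v, hvL, v, hvL, rfl⟩
    have hwwLL : (τ * v) * (τ * v) ∈ latMul L L := AddSubgroup.subset_closure ⟨(τ * v), hwL, (τ * v), hwL, rfl⟩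
    have hαLL : v * (τ * v) / (a : ℂ) ∈ latMul L L := by
      have heq : v * (τ * v) / (a : ℂ) = u1 • (v * (τ * v)) + u2 • (-(v * v) - (τ * v) * (τ * v)) := by
        simp only [zsmul_eq_mul]
        field_simp
        linear_combination ((u2 : ℂ)) * relq - (τ) * hbezC
      rw [heq]
      exact add_mem (AddSubgroup.zsmul_mem _ hvwLL u1)
        (AddSubgroup.zsmul_mem _ (sub_mem (neg_mem hvvLL) hwwLL) u2)
    rw [← hs, smul_eq_mul]
    have hsplit : (v * (τ * v) / (a : ℂ)) * ((m : ℂ) + (k : ℂ) * ((a : ℂ) * τ)) =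
        m • (v * (τ * v) / (a : ℂ)) + k • ((τ * v) * (τ * v)) := by
      simp only [zsmul_eq_mul]
      field_simp
    rw [hsplit]
    exact add_mem (AddSubgroup.zsmul_mem _ hαLL m) (AddSubgroup.zsmul_mem _ hwwLL k)
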